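/- arXiv:1004.3088 — 2 statements merged into one kernel-verified Lean document; each statement's English description precedes it below -/
import Mathlib

section
/- Let Σ = S^{n-1} with n ≥ 3, and define ψ : Σ → ℝ by ψ = -1 + ((n-1)/2) x_n^2 + ((n-1)(n+1)/24) x_n^4 + ((n-1)(n+1)(n+3)/240) x_n^6, where x_n is the restriction of the last coordinate. Then Δ_Σ ψ + (n-1) ψ = -((n-1)(n+1)(n+3)(n+5)/48) x_n^6, which is ≤ 0 everywhere on Σ. -/
open MeasureTheory
open scoped RealInnerProductSpace

noncomputable section

/-- Degree-zero homogeneous extension of a function on `ℝ^n`, used to compute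
intrinsic operators on the unit sphere extrinsically: the extension agrees with
`f` on the unit sphere and is constant along rays from the origin. -/
def sphExt {n : ℕ} (f : EuclideanSpace ℝ (Fin n) → ℝ) (y : EuclideanSpace ℝ (Fin n)) : ℝ :=
  f (‖y‖⁻¹ • y)

/-- The Laplace–Beltrami operator of the round unit sphere, computed at a point of the
sphere as the Euclidean Laplacian of the degree-zero homogeneous extension. -/
def sphLaplacian {n : ℕ} (f : EuclideanSpace ℝ (Fin n) → ℝ) (x : EuclideanSpace ℝ (Fin n)) : ℝ :=
  ∑ i : Fin n, fderiv ℝ (fun y => fderiv ℝ (sphExt f) y (EuclideanSpace.single i 1)) x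
    (EuclideanSpace.single i 1)

/-- The intrinsic (tangential) gradient on the round unit sphere, computed at a point of
the sphere as the Euclidean gradient of the degree-zero homogeneous extension. -/
def sphGradient {n : ℕ} (f : EuclideanSpace ℝ (Fin n) → ℝ) (x : EuclideanSpace ℝ (Fin n)) :
    EuclideanSpace ℝ (Fin n) :=
  gradient (sphExt f) x

def sphLU {n : ℕ} (p : Fin n) (m k : ℕ) (y : EuclideanSpace ℝ (Fin n)) :
    EuclideanSpace ℝ (Fin n) →L[ℝ] ℝ :=
  ((m : ℝ) * y p ^ (m - 1) * ((‖y‖ ^ 2) ^ k)⁻¹) • (EuclideanSpace.proj p) +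
    (-(2 * (k : ℝ)) * y p ^ m * ((‖y‖ ^ 2) ^ (k + 1))⁻¹) • (innerSL ℝ y)

lemma hasFDerivAt_coord {n : ℕ} (i : Fin n) (y : EuclideanSpace ℝ (Fin n)) :
    HasFDerivAt (fun z : EuclideanSpace ℝ (Fin n) => z i)
      (EuclideanSpace.proj i : EuclideanSpace ℝ (Fin n) →L[ℝ] ℝ) y := by
  exact (EuclideanSpace.proj i : EuclideanSpace ℝ (Fin n) →L[ℝ] ℝ).hasFDerivAt

lemma hasFDerivAt_U {n : ℕ} (p : Fin n) (m k : ℕ) {y : EuclideanSpace ℝ (Fin n)} (hy : y ≠ 0) :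
    HasFDerivAt (fun z : EuclideanSpace ℝ (Fin n) => z p ^ m * ((‖z‖ ^ 2) ^ k)⁻¹)
      (sphLU p m k y) y := by
  have hq : (‖y‖ : ℝ) ^ 2 ≠ 0 := pow_ne_zero _ (norm_ne_zero_iff.mpr hy)
  have hqk : ((‖y‖ : ℝ) ^ 2) ^ k ≠ 0 := pow_ne_zero _ hq
  have h1 : HasFDerivAt (fun z : EuclideanSpace ℝ (Fin n) => z p)
      (EuclideanSpace.proj p : EuclideanSpace ℝ (Fin n) →L[ℝ] ℝ) y := hasFDerivAt_coord p y
  have h2 : HasFDerivAt (fun z : EuclideanSpace ℝ (Fin n) => z p ^ m)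
      (((m : ℝ) * y p ^ (m - 1)) • (EuclideanSpace.proj p : EuclideanSpace ℝ (Fin n) →L[ℝ] ℝ)) y := by
    simpa [Function.comp_def] using (hasDerivAt_pow m (y p)).comp_hasFDerivAt y h1
  have h3 : HasFDerivAt (fun z : EuclideanSpace ℝ (Fin n) => ‖z‖ ^ 2)
      ((2 : ℕ) • (innerSL ℝ y)) y := (hasStrictFDerivAt_norm_sq y).hasFDerivAt
  have h4 : HasDerivAt (fun s : ℝ => (s ^ k)⁻¹)
      (-((k : ℝ) * (‖y‖ ^ 2) ^ (k - 1)) / ((‖y‖ ^ 2) ^ k) ^ 2) (‖y‖ ^ 2) :=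
    (hasDerivAt_pow k (‖y‖ ^ 2)).inv hqk
  have h5 : HasFDerivAt (fun z : EuclideanSpace ℝ (Fin n) => ((‖z‖ ^ 2) ^ k)⁻¹)
      ((-((k : ℝ) * (‖y‖ ^ 2) ^ (k - 1)) / ((‖y‖ ^ 2) ^ k) ^ 2) • ((2 : ℕ) • (innerSL ℝ y))) y := by
    simpa [Function.comp_def] using h4.comp_hasFDerivAt y h3
  have h6 := h2.mul h5
  refine h6.congr_fderiv ?_
  symm
  ext v
  simp only [sphLU, ContinuousLinearMap.add_apply, ContinuousLinearMap.smul_apply,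
    smul_eq_mul, ContinuousLinearMap.coe_smul', Pi.smul_apply, nsmul_eq_mul]
  rcases k with _ | k
  · simp
  · simp only [Nat.add_sub_cancel]
    field_simp
    ring

def Gfun {n : ℕ} (p i : Fin n) (a b c : ℝ) (z : EuclideanSpace ℝ (Fin n)) : ℝ :=
  (2 * a * (EuclideanSpace.single i (1:ℝ) p)) * (z p ^ 1 * ((‖z‖ ^ 2) ^ 1)⁻¹)
    + (-2 * a) * (z p ^ 2 * ((‖z‖ ^ 2) ^ 2)⁻¹ * z i)
    + (4 * b * (EuclideanSpace.single i (1:ℝ) p)) * (z p ^ 3 * ((‖z‖ ^ 2) ^ 2)⁻¹)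
    + (-4 * b) * (z p ^ 4 * ((‖z‖ ^ 2) ^ 3)⁻¹ * z i)
    + (6 * c * (EuclideanSpace.single i (1:ℝ) p)) * (z p ^ 5 * ((‖z‖ ^ 2) ^ 3)⁻¹)
    + (-6 * c) * (z p ^ 6 * ((‖z‖ ^ 2) ^ 4)⁻¹ * z i)

lemma hasFDerivAt_G {n : ℕ} (p i : Fin n) (a b c : ℝ) {x : EuclideanSpace ℝ (Fin n)}
    (hx : x ≠ 0) :
    HasFDerivAt (Gfun p i a b c)
      ((2 * a * (EuclideanSpace.single i (1:ℝ) p)) • sphLU p 1 1 x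
        + (-2 * a) • ((x p ^ 2 * ((‖x‖ ^ 2) ^ 2)⁻¹) • (EuclideanSpace.proj i) + x i • sphLU p 2 2 x)
        + (4 * b * (EuclideanSpace.single i (1:ℝ) p)) • sphLU p 3 2 x
        + (-4 * b) • ((x p ^ 4 * ((‖x‖ ^ 2) ^ 3)⁻¹) • (EuclideanSpace.proj i) + x i • sphLU p 4 3 x)
        + (6 * c * (EuclideanSpace.single i (1:ℝ) p)) • sphLU p 5 3 x
        + (-6 * c) • ((x p ^ 6 * ((‖x‖ ^ 2) ^ 4)⁻¹) • (EuclideanSpace.proj i) + x i • sphLU p 6 4 x)) x := by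
  have hT1 := (hasFDerivAt_U p 1 1 hx).const_mul (2 * a * (EuclideanSpace.single i (1:ℝ) p))
  have hT2 := ((hasFDerivAt_U p 2 2 hx).mul (hasFDerivAt_coord i x)).const_mul (-2 * a)
  have hT3 := (hasFDerivAt_U p 3 2 hx).const_mul (4 * b * (EuclideanSpace.single i (1:ℝ) p))
  have hT4 := ((hasFDerivAt_U p 4 3 hx).mul (hasFDerivAt_coord i x)).const_mul (-4 * b)
  have hT5 := (hasFDerivAt_U p 5 3 hx).const_mul (6 * c * (EuclideanSpace.single i (1:ℝ) p))
  have hT6 := ((hasFDerivAt_U p 6 4 hx).mul (hasFDerivAt_coord i x)).const_mul (-6 * c)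
  exact ((((hT1.add hT2).add hT3).add hT4).add hT5).add hT6

lemma sphLap_eq {n : ℕ} (p : Fin n) (x : EuclideanSpace ℝ (Fin n)) (hx1 : ‖x‖ = 1) :
    sphLaplacian (fun y => -1 + (((n : ℝ) - 1) / 2) * (y p) ^ 2
        + (((n : ℝ) - 1) * ((n : ℝ) + 1) / 24) * (y p) ^ 4
        + (((n : ℝ) - 1) * ((n : ℝ) + 1) * ((n : ℝ) + 3) / 240) * (y p) ^ 6) x
      = 2 * (((n : ℝ) - 1) / 2) - 2 * (n : ℝ) * (((n : ℝ) - 1) / 2) * (x p) ^ 2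
        + 12 * (((n : ℝ) - 1) * ((n : ℝ) + 1) / 24) * (x p) ^ 2
        - 4 * ((n : ℝ) + 2) * (((n : ℝ) - 1) * ((n : ℝ) + 1) / 24) * (x p) ^ 4
        + 30 * (((n : ℝ) - 1) * ((n : ℝ) + 1) * ((n : ℝ) + 3) / 240) * (x p) ^ 4
        - 6 * ((n : ℝ) + 4) * (((n : ℝ) - 1) * ((n : ℝ) + 1) * ((n : ℝ) + 3) / 240) * (x p) ^ 6 := by
  have hx0 : x ≠ 0 := by
    intro h; rw [h] at hx1; simp at hx1
  set a : ℝ := ((n : ℝ) - 1) / 2 with ha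
  set b : ℝ := ((n : ℝ) - 1) * ((n : ℝ) + 1) / 24 with hb
  set c : ℝ := ((n : ℝ) - 1) * ((n : ℝ) + 1) * ((n : ℝ) + 3) / 240 with hc
  set f : EuclideanSpace ℝ (Fin n) → ℝ :=
    fun y => -1 + a * (y p) ^ 2 + b * (y p) ^ 4 + c * (y p) ^ 6 with hfdef
  set F : EuclideanSpace ℝ (Fin n) → ℝ :=
    fun z => -1 + a * (z p ^ 2 * ((‖z‖ ^ 2) ^ 1)⁻¹) + b * (z p ^ 4 * ((‖z‖ ^ 2) ^ 2)⁻¹)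
      + c * (z p ^ 6 * ((‖z‖ ^ 2) ^ 3)⁻¹) with hFdef
  have hFE : ∀ z : EuclideanSpace ℝ (Fin n), z ≠ 0 → sphExt f z = F z := by
    intro z hz
    have hnz : ‖z‖ ≠ 0 := norm_ne_zero_iff.mpr hz
    simp only [sphExt, hfdef, hFdef, PiLp.smul_apply, smul_eq_mul]
    field_simp
  have hFd : ∀ z : EuclideanSpace ℝ (Fin n), z ≠ 0 →
      HasFDerivAt F (a • sphLU p 2 1 z + b • sphLU p 4 2 z + c • sphLU p 6 3 z) z := by
    intro z hz
    have h1 := (hasFDerivAt_U p 2 1 hz).const_mul a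
    have h2 := (hasFDerivAt_U p 4 2 hz).const_mul b
    have h3 := (hasFDerivAt_U p 6 3 hz).const_mul c
    exact ((h1.const_add (-1)).add h2).add h3
  have hG : ∀ (i : Fin n) (z : EuclideanSpace ℝ (Fin n)), z ≠ 0 →
      fderiv ℝ (sphExt f) z (EuclideanSpace.single i 1) = Gfun p i a b c z := by
    intro i z hz
    have hev : sphExt f =ᶠ[nhds z] F := by
      filter_upwards [isOpen_compl_singleton.mem_nhds (show z ∈ ({0} : Set (EuclideanSpace ℝ (Fin n)))ᶜ by simpa using hz)] with w hw
      exact hFE w (by simpa using hw)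
    rw [hev.fderiv_eq, (hFd z hz).fderiv]
    simp only [Gfun, sphLU, ContinuousLinearMap.add_apply, ContinuousLinearMap.smul_apply,
      smul_eq_mul, PiLp.proj_apply, innerSL_apply_apply, EuclideanSpace.inner_single_right,
      conj_trivial, mul_one]
    ring
  have key : ∀ i : Fin n,
      fderiv ℝ (fun z => fderiv ℝ (sphExt f) z (EuclideanSpace.single i 1)) x
          (EuclideanSpace.single i 1)
        = (2*a + 12*b*(x p)^2 + 30*c*(x p)^4) * (if p = i then (1:ℝ) else 0)
          + (-8*a*(x p) - 32*b*(x p)^3 - 72*c*(x p)^5) * ((if p = i then (1:ℝ) else 0) * x i)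
          + (8*a*(x p)^2 + 24*b*(x p)^4 + 48*c*(x p)^6) * (x i * x i)
          + (-2*a*(x p)^2 - 4*b*(x p)^4 - 6*c*(x p)^6) := by
    intro i
    have hev : (fun z => fderiv ℝ (sphExt f) z (EuclideanSpace.single i 1)) =ᶠ[nhds x]
        Gfun p i a b c := by
      filter_upwards [isOpen_compl_singleton.mem_nhds (show x ∈ ({0} : Set (EuclideanSpace ℝ (Fin n)))ᶜ by simpa using hx0)] with w hw
      exact hG i w (by simpa using hw)
    rw [hev.fderiv_eq, (hasFDerivAt_G p i a b c hx0).fderiv]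
    simp only [sphLU, ContinuousLinearMap.add_apply, ContinuousLinearMap.smul_apply,
      smul_eq_mul, PiLp.proj_apply, innerSL_apply_apply, EuclideanSpace.inner_single_right,
      conj_trivial, mul_one, EuclideanSpace.single_apply, hx1, one_pow, inv_one]
    by_cases hip : p = i
    · subst hip
      simp only [EuclideanSpace.single_apply, eq_self_iff_true, if_true]
      ring
    · have hip' : ¬(i = p) := fun h => hip h.symm
      simp only [EuclideanSpace.single_apply, eq_self_iff_true, if_true, if_neg hip, if_neg hip']
      ring
  have hsq : (∑ i : Fin n, x i * x i) = 1 := by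
    have h := real_inner_self_eq_norm_sq x
    rw [hx1, PiLp.inner_apply] at h
    simpa [PiLp.inner_apply, RCLike.inner_apply, conj_trivial, ← sq] using h
  have hD : (∑ i : Fin n, if p = i then (1:ℝ) else 0) = 1 := by
    simp
  have hDX : (∑ i : Fin n, (if p = i then (1:ℝ) else 0) * x i) = x p := by
    simp [ite_mul]
  rw [show sphLaplacian f x = ∑ i : Fin n,
      fderiv ℝ (fun z => fderiv ℝ (sphExt f) z (EuclideanSpace.single i 1)) x
        (EuclideanSpace.single i 1) from rfl]
  rw [Finset.sum_congr rfl (fun i _ => key i)]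
  simp only [Finset.sum_add_distrib, ← Finset.mul_sum, hsq, hD, hDX, Finset.sum_const,
    Finset.card_univ, Fintype.card_fin, nsmul_eq_mul]
  ring

/-- For `Σ = S^{n-1}` with `n ≥ 3` and
`ψ = -1 + ((n-1)/2) x_n² + ((n-1)(n+1)/24) x_n⁴ + ((n-1)(n+1)(n+3)/240) x_n⁶`, one has
`Δ_Σ ψ + (n-1) ψ = -((n-1)(n+1)(n+3)(n+5)/48) x_n⁶ ≤ 0` everywhere on `Σ`. -/
theorem stmt_3 (n : ℕ) (hn : 3 ≤ n) :
    ∀ x ∈ Metric.sphere (0 : EuclideanSpace ℝ (Fin n)) 1,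
      sphLaplacian (fun y =>
          -1 + (((n : ℝ) - 1) / 2) * (y ⟨n - 1, by omega⟩) ^ 2
            + (((n : ℝ) - 1) * ((n : ℝ) + 1) / 24) * (y ⟨n - 1, by omega⟩) ^ 4
            + (((n : ℝ) - 1) * ((n : ℝ) + 1) * ((n : ℝ) + 3) / 240) * (y ⟨n - 1, by omega⟩) ^ 6)
          x
        + ((n : ℝ) - 1) *
          (-1 + (((n : ℝ) - 1) / 2) * (x ⟨n - 1, by omega⟩) ^ 2
            + (((n : ℝ) - 1) * ((n : ℝ) + 1) / 24) * (x ⟨n - 1, by omega⟩) ^ 4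
            + (((n : ℝ) - 1) * ((n : ℝ) + 1) * ((n : ℝ) + 3) / 240) * (x ⟨n - 1, by omega⟩) ^ 6)
        = -(((n : ℝ) - 1) * ((n : ℝ) + 1) * ((n : ℝ) + 3) * ((n : ℝ) + 5) / 48) *
            (x ⟨n - 1, by omega⟩) ^ 6
      ∧ -(((n : ℝ) - 1) * ((n : ℝ) + 1) * ((n : ℝ) + 3) * ((n : ℝ) + 5) / 48) *
            (x ⟨n - 1, by omega⟩) ^ 6 ≤ 0 := by
  intro x hx
  have hx1 : ‖x‖ = 1 := by simpa using mem_sphere_zero_iff_norm.mp hx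
  have h3 : (3 : ℝ) ≤ (n : ℝ) := by exact_mod_cast hn
  constructor
  · rw [sphLap_eq (⟨n - 1, by omega⟩ : Fin n) x hx1]
    ring
  · have h6 : (0 : ℝ) ≤ (x ⟨n - 1, by omega⟩) ^ 6 := by positivity
    have hK : (0 : ℝ) ≤ ((n : ℝ) - 1) * ((n : ℝ) + 1) * ((n : ℝ) + 3) * ((n : ℝ) + 5) / 48 := by
      apply div_nonneg _ (by norm_num)
      have h1 : (0 : ℝ) ≤ (n : ℝ) - 1 := by linarith
      have h2 : (0 : ℝ) ≤ (n : ℝ) + 1 := by linarith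
      have h4 : (0 : ℝ) ≤ (n : ℝ) + 3 := by linarith
      have h5 : (0 : ℝ) ≤ (n : ℝ) + 5 := by linarith
      exact mul_nonneg (mul_nonneg (mul_nonneg h1 h2) h4) h5
    rw [neg_mul]
    exact neg_nonpos.mpr (mul_nonneg hK h6)
end
end

section
/- There exists δ₀ > 0 such that for all 0 < δ < δ₀, the function e^{-1/(f-δ)} is subharmonic on the region {δ < f < 3δ} ⊂ S^n, where f is the restriction of x_{n+1} to the round sphere S^n. -/
open MeasureTheory
open scoped RealInnerProductSpace

noncomputable section

open Real
variable {n : ℕ}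
abbrev E (n : ℕ) := EuclideanSpace ℝ (Fin (n+1))
def qf (y : E n) : ℝ := ∑ i, y i ^ 2
def sf (y : E n) : ℝ := qf y ^ (-(1/2) : ℝ)
def vf (n : ℕ) (y : E n) : ℝ := y (Fin.last n) * sf y

lemma qf_nonneg (y : E n) : 0 ≤ qf y := Finset.sum_nonneg fun _ _ => sq_nonneg _

lemma ext_eq (δ : ℝ) :
    sphExt (fun y : E n => Real.exp (-(y (Fin.last n) - δ)⁻¹)) =
      fun y => Real.exp (-(vf n y - δ)⁻¹) := by
  funext y
  have hq : ‖y‖ = Real.sqrt (qf y) := by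
    rw [EuclideanSpace.norm_eq]
    congr 1
    refine Finset.sum_congr rfl fun i _ => ?_
    simp [Real.norm_eq_abs, sq_abs]
  have hs : ‖y‖⁻¹ = sf y := by
    rw [hq, Real.sqrt_eq_rpow, sf, ← Real.rpow_neg (qf_nonneg y)]
  simp only [sphExt, PiLp.smul_apply, smul_eq_mul, vf, hs, mul_comm]

def Dq (y : E n) : E n →L[ℝ] ℝ := ∑ i, (2 * y i) • EuclideanSpace.proj i

lemma hasFDerivAt_qf (y : E n) : HasFDerivAt qf (Dq y) y := by
  have : ∀ i : Fin (n+1), HasFDerivAt (fun z : E n => z i ^ 2)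
      ((2 * y i) • (EuclideanSpace.proj i : E n →L[ℝ] ℝ)) y := by
    intro i
    have hp := (EuclideanSpace.proj i : E n →L[ℝ] ℝ).hasFDerivAt (x := y)
    have h := hp.mul hp
    have e : (fun z : E n => z i ^ 2) = ⇑(EuclideanSpace.proj i : E n →L[ℝ] ℝ) *
        ⇑(EuclideanSpace.proj i : E n →L[ℝ] ℝ) := by funext z; simp [sq]
    rw [e]; exact h.congr_fderiv (by ext z; simp; ring)
  exact HasFDerivAt.fun_sum (u := Finset.univ) (fun i _ => this i)

def Ds (y : E n) : E n →L[ℝ] ℝ := (-(1/2) * qf y ^ (-(1/2) - 1 : ℝ)) • Dq y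

lemma hasFDerivAt_sf {y : E n} (hy : qf y ≠ 0) : HasFDerivAt sf (Ds y) y := by
  have h1 : HasDerivAt (fun t : ℝ => t ^ (-(1/2) : ℝ)) (-(1/2) * qf y ^ (-(1/2) - 1 : ℝ)) (qf y) :=
    Real.hasDerivAt_rpow_const (Or.inl hy)
  exact h1.comp_hasFDerivAt y (hasFDerivAt_qf y)

def Dv (y : E n) : E n →L[ℝ] ℝ :=
  y (Fin.last n) • Ds y + sf y • EuclideanSpace.proj (Fin.last n)

lemma hasFDerivAt_vf {y : E n} (hy : qf y ≠ 0) : HasFDerivAt (vf n) (Dv y) y :=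
  ((EuclideanSpace.proj (Fin.last n) : E n →L[ℝ] ℝ).hasFDerivAt (x := y)).mul (hasFDerivAt_sf hy)

-- φ and its derivative
lemma hasDerivAt_phi (δ t : ℝ) (ht : t - δ ≠ 0) :
    HasDerivAt (fun u : ℝ => Real.exp (-(u - δ)⁻¹))
      (Real.exp (-(t - δ)⁻¹) * ((t - δ) ^ 2)⁻¹) t := by
  have h1 : HasDerivAt (fun u : ℝ => u - δ) 1 t := (hasDerivAt_id t).sub_const δ
  have h2 := (h1.inv ht).neg
  have h3 := h2.exp
  refine h3.congr_deriv ?_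
  simp only [Pi.neg_apply, Pi.inv_apply]
  field_simp

def Dg (δ : ℝ) (y : E n) : E n →L[ℝ] ℝ :=
  (Real.exp (-(vf n y - δ)⁻¹) * ((vf n y - δ) ^ 2)⁻¹) • Dv y

lemma hasFDerivAt_g {δ : ℝ} {y : E n} (hy : qf y ≠ 0) (hv : vf n y - δ ≠ 0) :
    HasFDerivAt (fun z => Real.exp (-(vf n z - δ)⁻¹)) (Dg δ y) y :=
  (hasDerivAt_phi δ (vf n y) hv).comp_hasFDerivAt y (hasFDerivAt_vf hy)

def Pf (δ : ℝ) (i : Fin (n+1)) (y : E n) : ℝ :=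
  Real.exp (-(vf n y - δ)⁻¹) * ((vf n y - δ) ^ 2)⁻¹ *
    (y (Fin.last n) * (-(1/2) * qf y ^ (-(1/2) - 1 : ℝ) * (2 * y i)) +
      sf y * (if i = Fin.last n then 1 else 0))

lemma Dg_apply (δ : ℝ) (y : E n) (i : Fin (n+1)) :
    Dg δ y (EuclideanSpace.single i 1) = Pf δ i y := by
  simp [Dg, Dv, Ds, Dq, Pf, ContinuousLinearMap.sum_apply, PiLp.proj_apply,
    EuclideanSpace.single_apply, Finset.mul_sum]
  rcases eq_or_ne i (Fin.last n) with h | h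
  · subst h; simp; ring
  · simp [h, Ne.symm h]

-- derivative of ψ t = exp(-(t-δ)⁻¹) * ((t-δ)^2)⁻¹
lemma hasDerivAt_psi (δ t : ℝ) (ht : t - δ ≠ 0) :
    HasDerivAt (fun u : ℝ => Real.exp (-(u - δ)⁻¹) * ((u - δ) ^ 2)⁻¹)
      (Real.exp (-(t - δ)⁻¹) * ((t - δ)⁻¹ ^ 4 - 2 * (t - δ)⁻¹ ^ 3)) t := by
  have h1 : HasDerivAt (fun u : ℝ => u - δ) 1 t := (hasDerivAt_id t).sub_const δ
  have h2 : HasDerivAt (fun u : ℝ => ((u - δ) ^ 2)⁻¹)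
      (-(2 * (t - δ) ^ 1 * 1) / ((t - δ) ^ 2) ^ 2) t := (h1.pow 2).inv (pow_ne_zero _ ht)
  have h3 := (hasDerivAt_phi δ t ht).mul h2
  refine h3.congr_deriv ?_
  field_simp
  ring

lemma fderiv_Pf (δ : ℝ) (i : Fin (n+1)) {x : E n} (hq : qf x = 1) (ht : vf n x - δ ≠ 0) :
    fderiv ℝ (Pf δ i) x (EuclideanSpace.single i 1)
      = Real.exp (-(x (Fin.last n) - δ)⁻¹) *
        (((x (Fin.last n) - δ)⁻¹ ^ 4 - 2 * (x (Fin.last n) - δ)⁻¹ ^ 3) *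
            ((if i = Fin.last n then (1:ℝ) else 0) - x (Fin.last n) * x i) ^ 2
          + (x (Fin.last n) - δ)⁻¹ ^ 2 *
            (-(2 * (if i = Fin.last n then (1:ℝ) else 0) * x i) - x (Fin.last n)
              + 3 * x (Fin.last n) * x i ^ 2)) := by
  have hq0 : qf x ≠ 0 := by rw [hq]; norm_num
  have hsfx : sf x = 1 := by rw [sf, hq, Real.one_rpow]
  have hvx : vf n x = x (Fin.last n) := by rw [vf, hsfx, mul_one]
  have hDq := hasFDerivAt_qf x
  have hrpow : HasDerivAt (fun t : ℝ => t ^ (-(1/2) - 1 : ℝ))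
      ((-(1/2) - 1) * qf x ^ ((-(1/2) - 1) - 1 : ℝ)) (qf x) :=
    Real.hasDerivAt_rpow_const (Or.inl hq0)
  have h1 : HasFDerivAt (fun y : E n => qf y ^ (-(1/2) - 1 : ℝ))
      (((-(1/2) - 1) * qf x ^ ((-(1/2) - 1) - 1 : ℝ)) • Dq x) x :=
    hrpow.comp_hasFDerivAt x hDq
  have hproji := (EuclideanSpace.proj (𝕜 := ℝ) i).hasFDerivAt (x := x)
  have h2 := hproji.const_mul (2:ℝ)
  have h3 := (h1.const_mul (-(1/2) : ℝ)).mul h2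
  have hL := (EuclideanSpace.proj (𝕜 := ℝ) (Fin.last n)).hasFDerivAt (x := x)
  have h4 := hL.mul h3
  have h5 := (hasFDerivAt_sf hq0).mul_const (if i = Fin.last n then (1:ℝ) else 0)
  have h6 := h4.add h5
  have hv := hasFDerivAt_vf hq0
  have hpsi := hasDerivAt_psi δ (vf n x) ht
  have hA := hpsi.comp_hasFDerivAt x hv
  have hP := hA.mul h6
  have hP' : HasFDerivAt (Pf δ i) _ x := hP
  rw [hP'.fderiv]
  rcases eq_or_ne i (Fin.last n) with h | h
  · subst h
    simp [Dv, Ds, Dq, ContinuousLinearMap.sum_apply, PiLp.proj_apply,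
      EuclideanSpace.single_apply, Finset.mul_sum, hq, hsfx, hvx, Real.one_rpow]
    ring
  · simp [Dv, Ds, Dq, ContinuousLinearMap.sum_apply, PiLp.proj_apply,
      EuclideanSpace.single_apply, Finset.mul_sum, hq, hsfx, hvx, Real.one_rpow, h, Ne.symm h]
    ring


lemma fderiv_eventually (δ : ℝ) (i : Fin (n+1)) {x : E n} (hq : qf x = 1)
    (ht : vf n x ≠ δ) :
    fderiv ℝ (fun y => fderiv ℝ (fun z : E n => Real.exp (-(vf n z - δ)⁻¹)) y
        (EuclideanSpace.single i 1)) x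
      = fderiv ℝ (Pf δ i) x := by
  have hq0 : qf x ≠ 0 := by rw [hq]; norm_num
  have h1 : ∀ᶠ y in nhds x, qf y ≠ 0 := (hasFDerivAt_qf x).continuousAt.eventually_ne hq0
  have h2 : ∀ᶠ y in nhds x, vf n y ≠ δ := (hasFDerivAt_vf hq0).continuousAt.eventually_ne ht
  have hE : (fun y => fderiv ℝ (fun z : E n => Real.exp (-(vf n z - δ)⁻¹)) y
      (EuclideanSpace.single i 1)) =ᶠ[nhds x] Pf δ i := by
    filter_upwards [h1, h2] with y hy1 hy2
    rw [(hasFDerivAt_g hy1 (sub_ne_zero.2 hy2)).fderiv, Dg_apply]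
  exact hE.fderiv_eq

lemma laplacian_eq (δ : ℝ) (x : E n) (hq : qf x = 1)
    (ht : x (Fin.last n) ≠ δ) :
    sphLaplacian (fun y : E n => Real.exp (-(y (Fin.last n) - δ)⁻¹)) x
      = Real.exp (-(x (Fin.last n) - δ)⁻¹) *
        (((x (Fin.last n) - δ)⁻¹ ^ 4 - 2 * (x (Fin.last n) - δ)⁻¹ ^ 3) *
            (1 - x (Fin.last n) ^ 2)
          - n * x (Fin.last n) * (x (Fin.last n) - δ)⁻¹ ^ 2) := by
  have hsfx : sf x = 1 := by rw [sf, hq, Real.one_rpow]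
  have hvx : vf n x = x (Fin.last n) := by rw [vf, hsfx, mul_one]
  have hv : vf n x ≠ δ := by rw [hvx]; exact ht
  set t := x (Fin.last n) with htdef
  set u := (t - δ)⁻¹ with hudef
  set Ex := Real.exp (-u) with hEdef
  set A := Ex * (u^4 - 2*u^3) with hA
  set B := Ex * ((u^4 - 2*u^3) * (-2*t) - 2*u^2) with hB
  set C := Ex * ((u^4 - 2*u^3) * t^2 + 3*u^2*t) with hC
  set D := -(Ex * (u^2 * t)) with hD
  have step : ∀ i : Fin (n+1),
      fderiv ℝ (fun y => fderiv ℝ (sphExt (fun y : E n =>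
          Real.exp (-(y (Fin.last n) - δ)⁻¹))) y (EuclideanSpace.single i 1)) x
        (EuclideanSpace.single i 1)
      = A * (if i = Fin.last n then 1 else 0) + B * (if i = Fin.last n then x i else 0)
        + C * x i ^ 2 + D := by
    intro i
    rw [ext_eq δ, fderiv_eventually δ i hq hv,
      fderiv_Pf δ i hq (by rw [hvx]; exact sub_ne_zero.2 ht)]
    rcases eq_or_ne i (Fin.last n) with h | h
    · subst h
      simp only [hA, hB, hC, hD, hEdef, hudef, if_true, eq_self_iff_true]
      ring
    · simp only [hA, hB, hC, hD, hEdef, hudef, if_neg h]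
      ring
  rw [sphLaplacian, Finset.sum_congr rfl fun i _ => step i]
  have hs1 : ∑ i : Fin (n+1), (if i = Fin.last n then (1:ℝ) else 0) = 1 := by simp
  have hs2 : ∑ i : Fin (n+1), (if i = Fin.last n then x i else 0) = t := by simp [htdef]
  have hs3 : ∑ i : Fin (n+1), x i ^ 2 = 1 := hq
  rw [Finset.sum_add_distrib, Finset.sum_add_distrib, Finset.sum_add_distrib,
    ← Finset.mul_sum, ← Finset.mul_sum, ← Finset.mul_sum, hs1, hs2, hs3,
    Finset.sum_const, Finset.card_univ, Fintype.card_fin]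
  push_cast
  simp only [hA, hB, hC, hD, hEdef, hudef, nsmul_eq_mul]
  push_cast
  ring

lemma qf_eq_norm_sq (y : E n) : qf y = ‖y‖ ^ 2 := by
  have hq : ‖y‖ = Real.sqrt (qf y) := by
    rw [EuclideanSpace.norm_eq]
    congr 1
    refine Finset.sum_congr rfl fun i _ => ?_
    simp [Real.norm_eq_abs, sq_abs]
  rw [hq, Real.sq_sqrt (qf_nonneg y)]

set_option maxHeartbeats 1000000 in
/-- There exists `δ₀ > 0` such that for all `0 < δ < δ₀`, the function
`e^{-1/(f-δ)}` is subharmonic on the region `{δ < f < 3δ} ⊂ S^n`, where `f` is the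
restriction of `x_{n+1}` to the round sphere. -/
theorem stmt_11 (n : ℕ) (hn : 1 ≤ n) :
    ∃ δ₀ > (0 : ℝ), ∀ δ : ℝ, 0 < δ → δ < δ₀ →
      ∀ x ∈ Metric.sphere (0 : EuclideanSpace ℝ (Fin (n + 1))) 1,
        δ < x (Fin.last n) → x (Fin.last n) < 3 * δ →
        0 ≤ sphLaplacian (fun y => Real.exp (-(y (Fin.last n) - δ)⁻¹)) x := by
  refine ⟨1 / (100 * (n + 1)), by positivity, fun δ hδ hδ0 x hx h1 h2 => ?_⟩
  have hnorm : ‖x‖ = 1 := by simpa using mem_sphere_zero_iff_norm.mp hx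
  have hq : qf x = 1 := by rw [qf_eq_norm_sq, hnorm]; norm_num
  set t := x (Fin.last n) with htdef
  have htne : t ≠ δ := ne_of_gt h1
  rw [laplacian_eq δ x hq htne]
  set σ := t - δ with hσdef
  have hσ1 : 0 < σ := sub_pos.mpr h1
  have hσ2 : σ < 2 * δ := by rw [hσdef]; linarith
  have hcast : (1:ℝ) ≤ (n:ℝ) := by exact_mod_cast hn
  have hδ0' : δ * (100 * ((n:ℝ) + 1)) < 1 := by
    have h := (lt_div_iff₀ (by positivity : (0:ℝ) < 100 * ((n:ℝ) + 1))).mp hδ0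
    linarith
  have hδ2 : δ ≤ 1 / 200 := by nlinarith
  have hnδ : (n:ℝ) * δ ≤ 1 / 100 := by nlinarith
  have ht3 : t ≤ 3 / 200 := by linarith
  have hσ3 : σ ≤ 1 / 100 := by linarith
  have ht0 : 0 < t := lt_trans hδ h1
  have key : (σ⁻¹ ^ 4 - 2 * σ⁻¹ ^ 3) * (1 - t ^ 2) - n * t * σ⁻¹ ^ 2
      = ((1 - t ^ 2) * (1 - 2 * σ) - n * t * σ ^ 2) / σ ^ 4 := by
    field_simp
  rw [key]
  have hnt : (n:ℝ) * t ≤ 3 / 100 := by nlinarith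
  have hσsq : σ ^ 2 ≤ 1 / 10000 := by nlinarith
  have hA1 : (n:ℝ) * t * σ ^ 2 ≤ 3 / 1000000 := by nlinarith
  have hA2 : t ^ 2 ≤ 9 / 40000 := by nlinarith
  have hA3 : 0 ≤ σ * t ^ 2 := by positivity
  have hnum : 0 ≤ (1 - t ^ 2) * (1 - 2 * σ) - n * t * σ ^ 2 := by nlinarith
  positivity
end
end
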